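/- Let X = {x₀ < x₁ < … < x_p} and Y = {y₀ < y₁ < … < y_q} be finite sets of reals, and let g = [x_i, x_{i+1}]×[y_j, y_{j+1}] be a grid cell (formed by consecutive elements of X and of Y). Let R = (a,b)×(c,d) be an axis-parallel open rectangle such that (a,b) contains some element of X, (c,d) contains some element of Y, and R ∩ g ≠ ∅. Then R contains a corner of g, i.e., some point (u,v) with u ∈ {x_i, x_{i+1}} and v ∈ {y_j, y_{j+1}} lies in R. -/
import Mathlib

/-- If an open rectangle `(a,b)×(c,d)` contains a grid `x`-coordinate and a
grid `y`-coordinate, and it intersects the grid cell `[xi,xi1]×[yj,yj1]` formed by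
consecutive grid coordinates, then it contains a corner of that cell. -/
theorem stmt_1 (X Y : Finset ℝ) (xi xi1 yj yj1 a b c d : ℝ)
    (hxiX : xi ∈ X) (hxi1X : xi1 ∈ X) (hxlt : xi < xi1)
    (hxcons : ∀ x ∈ X, ¬(xi < x ∧ x < xi1))
    (hyjY : yj ∈ Y) (hyj1Y : yj1 ∈ Y) (hylt : yj < yj1)
    (hycons : ∀ y ∈ Y, ¬(yj < y ∧ y < yj1))
    (hab : a < b) (hcd : c < d)
    (hX : ∃ x ∈ X, a < x ∧ x < b) (hY : ∃ y ∈ Y, c < y ∧ y < d)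
    (hint : ((Set.Ioo a b ×ˢ Set.Ioo c d) ∩
      (Set.Icc xi xi1 ×ˢ Set.Icc yj yj1)).Nonempty) :
    ∃ u ∈ ({xi, xi1} : Set ℝ), ∃ v ∈ ({yj, yj1} : Set ℝ),
      (u, v) ∈ Set.Ioo a b ×ˢ Set.Ioo c d := by
  obtain ⟨⟨px, py⟩, ⟨⟨hpx1, hpx2⟩, hpy1, hpy2⟩, ⟨hqx1, hqx2⟩, hqy1, hqy2⟩ := hint
  obtain ⟨x, hxX, hax, hxb⟩ := hX
  obtain ⟨y, hyY, hcy, hyd⟩ := hY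
  have hu : (xi ∈ Set.Ioo a b) ∨ (xi1 ∈ Set.Ioo a b) := by
    by_contra h
    push_neg at h
    obtain ⟨h1, h2⟩ := h
    simp only [Set.mem_Ioo, not_and_or, not_lt] at h1 h2
    have hxib : xi < b := lt_of_le_of_lt hqx1 hpx2
    have haxi1 : a < xi1 := lt_of_lt_of_le hpx1 hqx2
    have h1' : xi ≤ a := h1.resolve_right (by linarith)
    have h2' : b ≤ xi1 := h2.resolve_left (by linarith)
    exact hxcons x hxX ⟨by linarith, by linarith⟩
  have hv : (yj ∈ Set.Ioo c d) ∨ (yj1 ∈ Set.Ioo c d) := by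
    by_contra h
    push_neg at h
    obtain ⟨h1, h2⟩ := h
    simp only [Set.mem_Ioo, not_and_or, not_lt] at h1 h2
    have hyjd : yj < d := lt_of_le_of_lt hqy1 hpy2
    have hcyj1 : c < yj1 := lt_of_lt_of_le hpy1 hqy2
    have h1' : yj ≤ c := h1.resolve_right (by linarith)
    have h2' : d ≤ yj1 := h2.resolve_left (by linarith)
    exact hycons y hyY ⟨by linarith, by linarith⟩
  rcases hu with hu | hu <;> rcases hv with hv | hv
  · exact ⟨xi, Or.inl rfl, yj, Or.inl rfl, hu, hv⟩
  · exact ⟨xi, Or.inl rfl, yj1, Or.inr rfl, hu, hv⟩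
  · exact ⟨xi1, Or.inr rfl, yj, Or.inl rfl, hu, hv⟩
  · exact ⟨xi1, Or.inr rfl, yj1, Or.inr rfl, hu, hv⟩
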